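/- Every overpseudoprime to base 2 is a super-Poulet pseudoprime, i.e., every divisor d > 1 of n satisfies 2^{d-1} ≡ 1 (mod d). -/

import Mathlib

/-- Multiplicative order of `b` modulo `n`. -/
noncomputable def ordn (b n : ℕ) : ℕ := orderOf (b : ZMod n)

/-- `n` is an overpseudoprime to base `b`: composite, coprime to `b`, and the
multiplicative order of `b` mod `d` is the same for all divisors `d > 1` of `n`. -/
def Overpsp (b n : ℕ) : Prop :=
  1 < n ∧ ¬ n.Prime ∧ Nat.Coprime b n ∧
    ∀ d, d ∣ n → 1 < d → ordn b d = ordn b n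

/-- `n` is primover to base `b`: prime or overpseudoprime to base `b`. -/
def Primover (b n : ℕ) : Prop := n.Prime ∨ Overpsp b n

/-- The cyclotomic coset of `2` modulo `n` containing `s`. -/
def coset (n s : ℕ) : Finset ℕ := (Finset.range n).image (fun k => 2 ^ k * s % n)

/-- The number of distinct cyclotomic cosets of `2` modulo `n`. -/
def numCosets (n : ℕ) : ℕ := ((Finset.Ioo 0 n).image (coset n)).card

/-- `Φ_N(b)` as a natural number. -/
noncomputable def PhiN (N b : ℕ) : ℕ := ((Polynomial.cyclotomic N ℤ).eval (b : ℤ)).toNat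

theorem stmt5 (n : ℕ) (h : Overpsp 2 n) :
    ∀ d, d ∣ n → 1 < d → 2 ^ (d - 1) ≡ 1 [MOD d] := by
  obtain ⟨hn1, -, hcop, hord⟩ := h
  set r := ordn 2 n with hr
  -- every divisor d ≥ 1 of n is ≡ 1 mod r
  have key : ∀ d, d ∣ n → 0 < d → d ≡ 1 [MOD r] := by
    intro d
    induction d using Nat.strong_induction_on with
    | _ d ih =>
      intro hdn hd0
      rcases eq_or_lt_of_le (show 1 ≤ d from hd0) with h1 | h1
      · rw [← h1]
      · -- d > 1, pick a prime factor p
        obtain ⟨p, hp, hpd⟩ := Nat.exists_prime_and_dvd (by omega : d ≠ 1)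
        have hpn : p ∣ n := hpd.trans hdn
        have hp2 : p ≠ 2 := by
          rintro rfl
          have h2 : (2:ℕ) ∣ 1 := hcop ▸ Nat.dvd_gcd dvd_rfl hpn
          omega
        haveI : Fact p.Prime := ⟨hp⟩
        have hne : (2 : ZMod p) ≠ 0 := by
          have : ((2 : ℕ) : ZMod p) ≠ 0 := by
            rw [Ne, ZMod.natCast_eq_zero_iff]
            intro hdvd
            exact hp2 ((Nat.prime_dvd_prime_iff_eq hp Nat.prime_two).mp hdvd)
          simpa using this
        have hdvd1 : orderOf (2 : ZMod p) ∣ p - 1 := ZMod.orderOf_dvd_card_sub_one hne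
        have hpr : r ∣ p - 1 := by
          have h2 : ordn 2 p = r := hord p hpn hp.one_lt
          have h3 : orderOf ((2:ℕ) : ZMod p) ∣ p - 1 := by push_cast; exact hdvd1
          exact h2 ▸ h3
        have hp1 : p ≡ 1 [MOD r] := by
          have hp1' : 1 ≤ p := hp.one_lt.le
          have : p - 1 ≡ 0 [MOD r] := (Nat.modEq_zero_iff_dvd).mpr hpr
          have := Nat.ModEq.add_right 1 this
          simpa [Nat.sub_add_cancel hp1'] using this
        -- d = p * (d / p)
        obtain ⟨e, he⟩ := hpd
        have hed : e ∣ d := ⟨p, by rw [he]; ring⟩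
        have he_dvd : e ∣ n := hed.trans hdn
        have he0 : 0 < e := by
          rcases Nat.eq_zero_or_pos e with rfl | h0
          · simp at he; omega
          · exact h0
        have helt : e < d := by
          rw [he]
          have h1p := hp.one_lt
          nlinarith
        have he1 : e ≡ 1 [MOD r] := ih e helt he_dvd he0
        calc d = p * e := he
          _ ≡ 1 * 1 [MOD r] := Nat.ModEq.mul hp1 he1
          _ = 1 := by ring
  intro d hdn hd1
  have hrd : r ∣ d - 1 := (Nat.modEq_iff_dvd' (by omega)).mp (key d hdn (by omega)).symm
  have hodvd : orderOf ((2 : ℕ) : ZMod d) ∣ d - 1 := by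
    have := hord d hdn hd1
    unfold ordn at this
    push_cast at this ⊢
    rw [this]; exact hrd
  have hpow : ((2 : ℕ) : ZMod d) ^ (d - 1) = 1 := orderOf_dvd_iff_pow_eq_one.mp hodvd
  have : ((2 ^ (d - 1) : ℕ) : ZMod d) = ((1 : ℕ) : ZMod d) := by push_cast; push_cast at hpow; exact hpow
  exact (ZMod.natCast_eq_natCast_iff _ _ _).mp this
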